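/- arXiv:2010.14134 — 8 statements merged into one kernel-verified Lean document; each statement's English description precedes it below -/
import Mathlib

section
/- If f is a probability density on ℝ that is positive, and f'(x)/f(x) is nonincreasing on (−∞, −a] for some a > 0, then the CDF F(x) = ∫_{−∞}^x f(t)dt has log F concave on (−∞, −a] (i.e., f/F is nonincreasing there). -/
open MeasureTheory

/-- Supermodularity of a concave function on ℝ. -/
lemma concave_supermodular {s : Set ℝ} {g : ℝ → ℝ} (hg : ConcaveOn ℝ s g)
    {p q r w : ℝ} (hp : p ∈ s) (hw : w ∈ s) (hpq : p ≤ q) (hpr : p ≤ r)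
    (hqw : q ≤ w) (hrw : r ≤ w) (hsum : q + r = p + w) :
    g p + g w ≤ g q + g r := by
  rcases eq_or_lt_of_le (hpq.trans hqw) with h | h
  · have hq : q = p := le_antisymm (by linarith) hpq
    have hr : r = w := by linarith
    rw [hq, hr]
  · set l : ℝ := (w - q) / (w - p) with hl
    have hwp : 0 < w - p := by linarith
    have h1 : 0 ≤ l := div_nonneg (by linarith) hwp.le
    have h2 : l ≤ 1 := by rw [hl, div_le_one hwp]; linarith
    have hmul : l * (w - p) = w - q := div_mul_cancel₀ _ hwp.ne'
    have hq' : l • p + (1 - l) • w = q := by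
      simp only [smul_eq_mul]; nlinarith [hmul]
    have hr' : (1 - l) • p + l • w = r := by
      simp only [smul_eq_mul]; nlinarith [hmul]
    have A := hg.2 hp hw h1 (show (0:ℝ) ≤ 1 - l by linarith) (by ring)
    have B := hg.2 hp hw (show (0:ℝ) ≤ 1 - l by linarith) h1 (by ring)
    rw [hq'] at A
    rw [hr'] at B
    simp only [smul_eq_mul] at A B
    linarith

/-- If `f` is a positive probability density whose log-derivative `f'/f` is nonincreasing
on `(-∞, -a]` for some `a > 0`, then the CDF `F` is log-concave there,
i.e. `f/F` is nonincreasing on `(-∞, -a]`. -/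
theorem logconcave_of_loggrad_antitone (f : ℝ → ℝ)
    (hdiff : Differentiable ℝ f) (hpos : ∀ x, 0 < f x)
    (hint : Integrable f) (hprob : ∫ t, f t = 1)
    (F : ℝ → ℝ) (hF : F = fun x => ∫ t in Set.Iic x, f t)
    (a : ℝ) (ha : 0 < a)
    (hanti : AntitoneOn (fun x => deriv f x / f x) (Set.Iic (-a))) :
    AntitoneOn (fun x => f x / F x) (Set.Iic (-a)) := by
  -- F is positive
  have hFpos : ∀ x, 0 < F x := by
    intro x
    rw [hF]
    have hi : IntegrableOn f (Set.Iic x) := hint.integrableOn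
    rw [setIntegral_pos_iff_support_of_nonneg_ae
      (Filter.Eventually.of_forall fun t => (hpos t).le) hi]
    have hsupp : Function.support f = Set.univ := by
      ext t; simp [Function.support, (hpos t).ne']
    rw [hsupp, Set.univ_inter, Real.volume_Iic]
    exact ENNReal.zero_lt_top
  -- log f is concave on Iic (-a)
  set g : ℝ → ℝ := fun x => Real.log (f x) with hg
  have hgdiff : ∀ x : ℝ, DifferentiableAt ℝ g x :=
    fun x => (hdiff x).log (hpos x).ne'
  have hconc : ConcaveOn ℝ (Set.Iic (-a)) g := by
    apply AntitoneOn.concaveOn_of_deriv (convex_Iic _)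
    · exact fun x _ => (hgdiff x).continuousAt.continuousWithinAt
    · exact fun x _ => (hgdiff x).differentiableWithinAt
    · intro u hu v hv huv
      rw [deriv.log (hdiff u) (hpos u).ne', deriv.log (hdiff v) (hpos v).ne']
      exact hanti (interior_subset hu) (interior_subset hv) huv
  -- main argument
  intro x hx y hy hxy
  simp only [Set.mem_Iic] at hx hy
  set d : ℝ := y - x with hd
  have hd0 : 0 ≤ d := by simp [hd]; linarith
  -- pointwise inequality
  have hkey : ∀ t ∈ Set.Iic x, f y * f t ≤ f x * f (t + d) := by
    intro t ht
    simp only [Set.mem_Iic] at ht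
    have hsup : g t + g y ≤ g x + g (t + d) := by
      have := concave_supermodular hconc (p := t) (q := x) (r := t + d) (w := y)
        (by simp only [Set.mem_Iic]; linarith) (by simp only [Set.mem_Iic]; linarith)
        (by linarith) (by linarith) (by linarith) (by simp only [hd]; linarith)
        (by simp only [hd]; ring)
      linarith
    have hexp := Real.exp_le_exp.2 hsup
    rw [Real.exp_add, Real.exp_add, hg] at hexp
    simp only [Real.exp_log (hpos _)] at hexp
    linarith
  -- integrability of translate
  have htrans : Integrable (fun t => f (t + d)) :=
    ((measurePreserving_add_right volume d).integrable_comp_emb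
      (MeasurableEquiv.addRight d).measurableEmbedding).2 hint
  -- integrate the pointwise inequality over Iic x
  have hmono : ∫ t in Set.Iic x, f y * f t ≤ ∫ t in Set.Iic x, f x * f (t + d) :=
    setIntegral_mono_on (hint.integrableOn.const_mul _)
      (htrans.integrableOn.const_mul _) measurableSet_Iic hkey
  -- substitution: ∫_{Iic x} f (t + d) = ∫_{Iic y} f
  have hsub : ∫ t in Set.Iic x, f (t + d) = ∫ s in Set.Iic y, f s := by
    have hpre : (fun t : ℝ => t + d) ⁻¹' Set.Iic y = Set.Iic x := by
      ext t
      simp only [Set.mem_preimage, Set.mem_Iic, hd]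
      constructor <;> intro h <;> linarith
    have := (measurePreserving_add_right volume d).setIntegral_preimage_emb
      (MeasurableEquiv.addRight d).measurableEmbedding f (Set.Iic y)
    rw [hpre] at this
    exact this
  rw [integral_const_mul, integral_const_mul, hsub] at hmono
  -- conclude
  have hFx : f y * F x ≤ f x * F y := by
    rw [hF]; exact hmono
  simp only
  rw [div_le_div_iff₀ (hFpos y) (hFpos x)]
  linarith
end

section
/- The symmetric Gaussian mixture with density f = 0.5·N(μ,σ²) + 0.5·N(−μ,σ²) is left-log-concave for all μ ∈ ℝ and σ > 0, i.e., its CDF F is log-concave on (−∞, 0]. -/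
open Real Set MeasureTheory Filter Topology intervalIntegral

lemma two_mul_le_exp_sub {y : ℝ} (hy : 0 ≤ y) : 2*y ≤ Real.exp y - Real.exp (-y) := by
  have h := Real.self_le_sinh_iff.mpr hy
  rw [Real.sinh_eq] at h
  linarith

lemma gauss_deriv (σ m : ℝ) (hσ : σ ≠ 0) (x : ℝ) :
    HasDerivAt (fun x => Real.exp (-(x - m)^2 / (2*σ^2)))
      (-((x-m)/σ^2) * Real.exp (-(x - m)^2 / (2*σ^2))) x := by
  have h0 : HasDerivAt (fun x : ℝ => x - m) 1 x := (hasDerivAt_id x).sub_const m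
  have h1 : HasDerivAt (fun x : ℝ => -(x - m)^2 / (2*σ^2)) (-((x-m)/σ^2)) x := by
    have h2 : HasDerivAt (fun x : ℝ => -(x - m)^2 / (2*σ^2)) _ x := ((h0.pow 2).neg).div_const (2*σ^2)
    convert h2 using 1
    field_simp
    ring
  have h3 := h1.exp
  convert h3 using 1
  ring

lemma gauss_integrable (σ m : ℝ) (hσ : 0 < σ) :
    Integrable (fun x => Real.exp (-(x - m)^2 / (2*σ^2))) := by
  have h := (integrable_exp_neg_mul_sq (b := (2*σ^2)⁻¹) (by positivity)).comp_sub_right m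
  have he : (fun x => Real.exp (-(x - m)^2 / (2*σ^2)))
      = fun x => Real.exp (-(2*σ^2)⁻¹ * (x-m)^2) := by
    funext x; congr 1; field_simp
  rw [he]; exact h

lemma key_ineq_aux (σ μ x : ℝ) (hσ : 0 < σ) (hx : x < 0) (hμ : 0 ≤ μ)
    (h : (x - μ) * Real.exp (-(x - μ)^2 / (2*σ^2)) + (x + μ) * Real.exp (-(x + μ)^2 / (2*σ^2)) < 0) :
    4 * μ^2 * (Real.exp (-(x - μ)^2 / (2*σ^2)) * Real.exp (-(x + μ)^2 / (2*σ^2)))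
      < σ^2 * (Real.exp (-(x - μ)^2 / (2*σ^2)) + Real.exp (-(x + μ)^2 / (2*σ^2)))^2 := by
  have hσ2 : (0:ℝ) < σ^2 := by positivity
  set E := Real.exp (μ*x/σ^2) with hE_def
  set u := Real.exp (-(μ*x)/σ^2) with hu_def
  set P := Real.exp (-(x^2+μ^2)/(2*σ^2)) with hP_def
  have hE : 0 < E := Real.exp_pos _
  have hu : 0 < u := Real.exp_pos _
  have hP : 0 < P := Real.exp_pos _
  have hEu : E * u = 1 := by
    rw [hE_def, hu_def, ← Real.exp_add,
      show μ * x / σ ^ 2 + -(μ * x) / σ ^ 2 = 0 by ring, Real.exp_zero]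
  have he1 : Real.exp (-(x - μ)^2 / (2*σ^2)) = P * E := by
    rw [hP_def, hE_def, ← Real.exp_add]
    congr 1
    field_simp
    ring
  have he2 : Real.exp (-(x + μ)^2 / (2*σ^2)) = P * u := by
    rw [hP_def, hu_def, ← Real.exp_add]
    congr 1
    field_simp
    ring
  have hu1 : 1 ≤ u := by
    rw [hu_def]
    apply Real.one_le_exp
    apply div_nonneg (by nlinarith) hσ2.le
  have hE1 : E ≤ 1 := by
    rw [hE_def]
    apply Real.exp_le_one_iff.mpr ?_
    apply div_nonpos_of_nonpos_of_nonneg (by nlinarith) hσ2.le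
  have hsinh : σ^2 * (u - E) ≥ -(2*μ*x) := by
    have h2 := two_mul_le_exp_sub (y := -(μ*x)/σ^2)
      (div_nonneg (by nlinarith) hσ2.le)
    have h3 : Real.exp (-(-(μ*x)/σ^2)) = E := by
      rw [hE_def]; congr 1; ring
    rw [h3, ← hu_def] at h2
    have h4 := mul_le_mul_of_nonneg_left h2 hσ2.le
    have h5 : σ^2 * (2 * (-(μ*x)/σ^2)) = -(2*μ*x) := by
      field_simp
    linarith [h4, h5.ge, h5.le]
  clear_value E u P
  rw [he1, he2] at h ⊢
  have hh : (x - μ) * E + (x + μ) * u < 0 := by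
    by_contra h'
    push_neg at h'
    nlinarith


  have hsum2 : 2 ≤ E + u := by nlinarith
  have hEu2 : E ≤ u := by nlinarith

  have hq : 4 * μ^2 < σ^2 * (E+u)^2 := by
    by_contra hq'
    push_neg at hq'
    have hA : 0 ≤ μ * (σ^2*(u-E) + 2*μ*x) := mul_nonneg hμ (by linarith [hsinh])
    have hB : 0 ≤ (-x) * (4*μ^2 - σ^2*(E+u)^2) :=
      mul_nonneg (by linarith) (by linarith)
    have hC : 0 ≤ ((-x) * σ^2) * ((E+u-2)*(E+u)) :=
      mul_nonneg (mul_nonneg (by linarith) hσ2.le)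
        (mul_nonneg (by linarith) (by linarith))
    have hD : 0 < σ^2 * (-((x - μ) * E + (x + μ) * u)) := mul_pos hσ2 (by linarith)
    nlinarith [hA, hB, hC, hD]
  have e : P*E*(P*u) = P^2 := by
    rw [show P*E*(P*u) = P^2*(E*u) by ring, hEu, mul_one]
  have e2 : (P*E+P*u)^2 = P^2*(E+u)^2 := by ring
  rw [e, e2]
  have hfin := mul_lt_mul_of_pos_left hq (pow_pos hP 2)
  linarith [hfin]

lemma key_ineq (σ μ x : ℝ) (hσ : 0 < σ) (hx : x < 0)
    (h : (x - μ) * Real.exp (-(x - μ)^2 / (2*σ^2)) + (x + μ) * Real.exp (-(x + μ)^2 / (2*σ^2)) < 0) :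
    4 * μ^2 * (Real.exp (-(x - μ)^2 / (2*σ^2)) * Real.exp (-(x + μ)^2 / (2*σ^2)))
      < σ^2 * (Real.exp (-(x - μ)^2 / (2*σ^2)) + Real.exp (-(x + μ)^2 / (2*σ^2)))^2 := by
  rcases le_or_gt 0 μ with hμ | hμ
  · exact key_ineq_aux σ μ x hσ hx hμ h
  · have h2 := key_ineq_aux σ (-μ) x hσ hx (by linarith)
    have e1 : x - -μ = x + μ := by ring
    have e2 : x + -μ = x - μ := by ring
    rw [e1, e2] at h2
    have h3 := h2 (by linarith)
    convert h3 using 2 <;> ring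

lemma integrableOn_exp_mul_Iic' (δ x : ℝ) (hδ : 0 < δ) :
    IntegrableOn (fun t => Real.exp (δ*t)) (Set.Iic x) := by
  refine integrableOn_Iic_of_intervalIntegral_norm_bounded (δ⁻¹ * Real.exp (δ*x)) x
    (fun y => ((Real.continuous_exp.comp (continuous_const.mul continuous_id)).integrableOn_Ioc))
    tendsto_id (Eventually.of_forall fun y => ?_)
  have h1 : ∀ t : ℝ, ‖Real.exp (δ*t)‖ = Real.exp (δ*t) := fun t => norm_of_nonneg (Real.exp_pos _).le
  simp_rw [h1]
  rw [intervalIntegral.integral_comp_mul_left (fun u => Real.exp u) hδ.ne']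
  rw [integral_exp]
  rw [smul_eq_mul]
  simp only [id_eq]
  have hp := Real.exp_pos (δ * y)
  have hδi : 0 < δ⁻¹ := inv_pos.2 hδ
  nlinarith [mul_pos hδi hp]

lemma integral_exp_mul_Iic' (δ x : ℝ) (hδ : 0 < δ) :
    ∫ t in Set.Iic x, Real.exp (δ*t) = δ⁻¹ * Real.exp (δ*x) := by
  refine tendsto_nhds_unique
    (intervalIntegral_tendsto_integral_Iic _ (integrableOn_exp_mul_Iic' δ x hδ) tendsto_id) ?_
  have h : ∀ y : ℝ, ∫ t in y..x, Real.exp (δ*t) = δ⁻¹ * Real.exp (δ*x) - δ⁻¹ * Real.exp (δ*y) := by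
    intro y
    rw [intervalIntegral.integral_comp_mul_left (fun u => Real.exp u) hδ.ne', integral_exp,
      smul_eq_mul]
    ring
  simp_rw [h]
  have h2 : Tendsto (fun y : ℝ => δ⁻¹ * Real.exp (δ*y)) atBot (𝓝 0) := by
    have h3 : Tendsto (fun y : ℝ => δ*y) atBot atBot := by
      exact Tendsto.const_mul_atBot hδ tendsto_id
    have := Real.tendsto_exp_atBot.comp h3
    have h4 := this.const_mul δ⁻¹
    simpa using h4
  have := (tendsto_const_nhds (x := δ⁻¹ * Real.exp (δ*x)) (f := atBot (α := ℝ))).sub h2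
  simpa using this

lemma tail_bound {f : ℝ → ℝ} (hf_int : Integrable f) (δ x : ℝ) (hδ : 0 < δ)
    (hbd : ∀ t ≤ x, f t ≤ f x * Real.exp (δ*(t-x))) :
    ∫ t in Set.Iic x, f t ≤ f x / δ := by
  have hInt2 : IntegrableOn (fun t => f x * Real.exp (δ*(t-x))) (Set.Iic x) := by
    have : (fun t => f x * Real.exp (δ*(t-x)))
        = fun t => (f x * Real.exp (-(δ*x))) * Real.exp (δ*t) := by
      funext t; rw [mul_assoc, ← Real.exp_add]; ring_nf
    rw [this]
    exact (integrableOn_exp_mul_Iic' δ x hδ).const_mul _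
  have h1 : ∫ t in Set.Iic x, f t ≤ ∫ t in Set.Iic x, f x * Real.exp (δ*(t-x)) :=
    setIntegral_mono_on hf_int.integrableOn hInt2 measurableSet_Iic (fun t ht => hbd t ht)
  refine h1.trans ?_
  have : (fun t => f x * Real.exp (δ*(t-x)))
      = fun t => (f x * Real.exp (-(δ*x))) * Real.exp (δ*t) := by
    funext t; rw [mul_assoc, ← Real.exp_add]; ring_nf
  rw [this, MeasureTheory.integral_const_mul, integral_exp_mul_Iic' δ x hδ]
  rw [show f x * Real.exp (-(δ*x)) * (δ⁻¹ * Real.exp (δ*x))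
      = f x * δ⁻¹ * (Real.exp (-(δ*x)) * Real.exp (δ*x)) by ring,
    ← Real.exp_add, show -(δ*x) + δ*x = 0 by ring, Real.exp_zero, mul_one, div_eq_mul_inv]

set_option maxHeartbeats 2000000 in
/-- The symmetric Gaussian mixture `0.5·N(μ,σ²) + 0.5·N(-μ,σ²)` is left-log-concave for all
`μ ∈ ℝ` and `σ > 0`: its CDF `F` is log-concave on `(-∞, 0]`, i.e. `f/F` is nonincreasing
there. -/
theorem gaussian_mixture_left_log_concave (μ σ : ℝ) (hσ : 0 < σ)
    (f : ℝ → ℝ)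
    (hf : f = fun x =>
      0.5 * ((Real.sqrt (2 * Real.pi * σ ^ 2))⁻¹ * Real.exp (-(x - μ) ^ 2 / (2 * σ ^ 2))) +
      0.5 * ((Real.sqrt (2 * Real.pi * σ ^ 2))⁻¹ * Real.exp (-(x + μ) ^ 2 / (2 * σ ^ 2))))
    (F : ℝ → ℝ) (hF : F = fun x => ∫ t in Set.Iic x, f t) :
    AntitoneOn (fun x => f x / F x) (Set.Iic 0) := by
  have hσ2 : (0:ℝ) < σ^2 := by positivity
  set c : ℝ := (Real.sqrt (2 * Real.pi * σ ^ 2))⁻¹ with hc_def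
  have hc : 0 < c := by
    rw [hc_def]
    have : 0 < 2 * Real.pi * σ ^ 2 := by positivity
    exact inv_pos.2 (Real.sqrt_pos.2 this)
  -- derivatives of the two Gaussian bumps
  have hgd1 : ∀ x : ℝ, HasDerivAt (fun y => Real.exp (-(y - μ)^2 / (2*σ^2)))
      (-((x-μ)/σ^2) * Real.exp (-(x - μ)^2 / (2*σ^2))) x := fun x => gauss_deriv σ μ hσ.ne' x
  have hgd2 : ∀ x : ℝ, HasDerivAt (fun y => Real.exp (-(y + μ)^2 / (2*σ^2)))
      (-((x+μ)/σ^2) * Real.exp (-(x + μ)^2 / (2*σ^2))) x := fun x => by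
    have h := gauss_deriv σ (-μ) hσ.ne' x
    simp only [sub_neg_eq_add] at h
    exact h
  -- first derivative of f
  obtain ⟨f1, hf1_def⟩ : ∃ f1 : ℝ → ℝ, f1 = fun x =>
      0.5 * (c * (-((x-μ)/σ^2) * Real.exp (-(x - μ)^2 / (2*σ^2)))) +
      0.5 * (c * (-((x+μ)/σ^2) * Real.exp (-(x + μ)^2 / (2*σ^2)))) := ⟨_, rfl⟩
  have hfd : ∀ x, HasDerivAt f (f1 x) x := fun x => by
    rw [hf, hf1_def]
    exact (((hgd1 x).const_mul c).const_mul 0.5).add (((hgd2 x).const_mul c).const_mul 0.5)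
  -- second derivative of f
  obtain ⟨f2, hf2_def⟩ : ∃ f2 : ℝ → ℝ, f2 = fun x =>
      0.5 * (c * (-(1/σ^2) * Real.exp (-(x - μ)^2 / (2*σ^2)) +
        -((x-μ)/σ^2) * (-((x-μ)/σ^2) * Real.exp (-(x - μ)^2 / (2*σ^2))))) +
      0.5 * (c * (-(1/σ^2) * Real.exp (-(x + μ)^2 / (2*σ^2)) +
        -((x+μ)/σ^2) * (-((x+μ)/σ^2) * Real.exp (-(x + μ)^2 / (2*σ^2))))) := ⟨_, rfl⟩
  have hlin : ∀ (m : ℝ) (x : ℝ), HasDerivAt (fun y : ℝ => -((y-m)/σ^2)) (-(1/σ^2)) x := by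
    intro m x
    have h : HasDerivAt (fun y : ℝ => -((y-m)/σ^2)) _ x := (((hasDerivAt_id x).sub_const m).div_const (σ^2)).neg
    convert h using 1
  have hlin2 : ∀ x : ℝ, HasDerivAt (fun y : ℝ => -((y+μ)/σ^2)) (-(1/σ^2)) x := fun x => by
    have h := hlin (-μ) x
    simp only [sub_neg_eq_add] at h
    exact h
  have hf1d : ∀ x, HasDerivAt f1 (f2 x) x := fun x => by
    rw [hf1_def, hf2_def]
    exact (((((hlin μ x).mul (hgd1 x))).const_mul c).const_mul 0.5).add
      (((((hlin2 x).mul (hgd2 x))).const_mul c).const_mul 0.5)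
  -- positivity and integrability of f
  have hfpos : ∀ x, 0 < f x := fun x => by
    rw [hf]
    have e1 := Real.exp_pos (-(x - μ)^2 / (2*σ^2))
    have e2 := Real.exp_pos (-(x + μ)^2 / (2*σ^2))
    nlinarith
  have hfint : Integrable f := by
    rw [hf]
    have h2 := gauss_integrable σ (-μ) hσ
    simp only [sub_neg_eq_add] at h2
    exact (((gauss_integrable σ μ hσ).const_mul c).const_mul 0.5).add
      ((h2.const_mul c).const_mul 0.5)
  have hfc : Continuous f := by
    have : Differentiable ℝ f := fun x => (hfd x).differentiableAt
    exact this.continuous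
  -- F : positivity, derivative, continuity
  have hFpos : ∀ x, 0 < F x := fun x => by
    rw [hF]
    rw [setIntegral_pos_iff_support_of_nonneg_ae
      (ae_of_all _ fun t => (hfpos t).le) hfint.integrableOn]
    have hsupp : Function.support f ∩ Set.Iic x = Set.Iic x :=
      Set.inter_eq_right.mpr fun t _ => (hfpos t).ne'
    rw [hsupp, Real.volume_Iic]
    norm_num
  have hFd : ∀ x, HasDerivAt F (f x) x := fun x => by
    have heq : ∀ u, F u = F x + ∫ t in x..u, f t := by
      intro u
      rw [hF]
      have h := intervalIntegral.integral_Iic_sub_Iic hfint.integrableOn hfint.integrableOn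
        (a := x) (b := u)
      simp only at h ⊢
      linarith
    have hD : HasDerivAt (fun u => F x + ∫ t in x..u, f t) (f x) x := by
      have h := intervalIntegral.integral_hasDerivAt_right (hfint.intervalIntegrable (a := x) (b := x))
        (hfc.stronglyMeasurableAtFilter _ _) (hfc.continuousAt)
      exact h.const_add (F x)
    exact hD.congr_of_eventuallyEq (Filter.Eventually.of_forall heq)
  have hFc : Continuous F := by
    have : Differentiable ℝ F := fun x => (hFd x).differentiableAt
    exact this.continuous
  -- D = f^2 - F * f1
  obtain ⟨D, hD_def⟩ : ∃ D : ℝ → ℝ, D = fun x => f x^2 - F x * f1 x := ⟨_, rfl⟩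
  have hDd : ∀ x, HasDerivAt D (f x * f1 x - F x * f2 x) x := fun x => by
    rw [hD_def]
    have h : HasDerivAt (fun x => f x^2 - F x * f1 x) _ x := ((hfd x).pow 2).sub ((hFd x).mul (hf1d x))
    convert h using 1
    ring
  have hDcont : Continuous D := by
    have : Differentiable ℝ D := fun x => (hDd x).differentiableAt
    exact this.continuous
  -- Key: at an interior zero of D, the derivative of D is positive
  have hkey : ∀ w, w < 0 → D w = 0 → 0 < f w * f1 w - F w * f2 w := by
    intro w hw hDw
    rw [hD_def] at hDw
    simp only at hDw
    have hf1pos : 0 < f1 w := by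
      by_contra h'
      push_neg at h'
      have h2 : F w * f1 w ≤ 0 := mul_nonpos_of_nonneg_of_nonpos (hFpos w).le h'
      nlinarith [hfpos w]
    -- from f1 w > 0 derive the hypothesis of key_ineq
    have hmills : (w - μ) * Real.exp (-(w - μ)^2 / (2*σ^2))
        + (w + μ) * Real.exp (-(w + μ)^2 / (2*σ^2)) < 0 := by
      rw [hf1_def] at hf1pos
      simp only at hf1pos
      by_contra h'
      push_neg at h'
      have e1 := Real.exp_pos (-(w - μ)^2 / (2*σ^2))
      have e2 := Real.exp_pos (-(w + μ)^2 / (2*σ^2))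
      have hid : σ^2 * (0.5 * (c * (-((w-μ)/σ^2) * Real.exp (-(w - μ)^2 / (2*σ^2)))) +
          0.5 * (c * (-((w+μ)/σ^2) * Real.exp (-(w + μ)^2 / (2*σ^2)))))
          = -(c/2) * ((w - μ) * Real.exp (-(w - μ)^2 / (2*σ^2))
            + (w + μ) * Real.exp (-(w + μ)^2 / (2*σ^2))) := by
        field_simp
        ring
      nlinarith [mul_pos hσ2 hf1pos, hid, mul_nonneg (le_of_lt hc) h']
    have hkey2 := key_ineq σ μ w hσ hw hmills
    -- quadratic form positivity : f1 w ^2 - f w * f2 w > 0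
    have hquad : 0 < f1 w^2 - f w * f2 w := by
      rw [hf1_def, hf2_def, hf]
      simp only
      have hident : (0.5 * (c * (-((w-μ)/σ^2) * Real.exp (-(w - μ)^2 / (2*σ^2)))) +
          0.5 * (c * (-((w+μ)/σ^2) * Real.exp (-(w + μ)^2 / (2*σ^2)))))^2 -
          (0.5 * (c * Real.exp (-(w - μ)^2 / (2*σ^2))) +
            0.5 * (c * Real.exp (-(w + μ)^2 / (2*σ^2)))) *
          (0.5 * (c * (-(1/σ^2) * Real.exp (-(w - μ)^2 / (2*σ^2)) +
            -((w-μ)/σ^2) * (-((w-μ)/σ^2) * Real.exp (-(w - μ)^2 / (2*σ^2))))) +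
          0.5 * (c * (-(1/σ^2) * Real.exp (-(w + μ)^2 / (2*σ^2)) +
            -((w+μ)/σ^2) * (-((w+μ)/σ^2) * Real.exp (-(w + μ)^2 / (2*σ^2))))))
          = (c^2/(4*σ^4)) * (σ^2 * (Real.exp (-(w - μ)^2 / (2*σ^2))
              + Real.exp (-(w + μ)^2 / (2*σ^2)))^2
            - 4 * μ^2 * (Real.exp (-(w - μ)^2 / (2*σ^2)) * Real.exp (-(w + μ)^2 / (2*σ^2)))) := by
        field_simp
        ring
      rw [hident]
      have h4 : (0:ℝ) < 4*σ^4 := by nlinarith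
      exact mul_pos (div_pos (pow_pos hc 2) h4) (by linarith)
    -- conclude
    have hFw : F w * f1 w = f w^2 := by linarith
    have h3 : 0 < (f w * f1 w - F w * f2 w) * f1 w := by
      have hexp : (f w * f1 w - F w * f2 w) * f1 w
          = f w * (f1 w^2 - f w * f2 w) + f2 w * (f w^2 - F w * f1 w) := by ring
      rw [hexp, hFw]
      simp only [sub_self, mul_zero, add_zero]
      exact mul_pos (hfpos w) hquad
    by_contra h'
    push_neg at h'
    nlinarith [mul_nonpos_of_nonpos_of_nonneg h' hf1pos.le]
  -- Main claim : D ≥ 0 on negatives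
  have hDnonneg : ∀ y, y < 0 → 0 ≤ D y := by
    intro y hy
    by_contra hneg
    push_neg at hneg
    by_cases hall : ∀ x ≤ y, D x < 0
    · -- W = F / f is strictly decreasing on Iic y, contradiction with tail bound
      obtain ⟨W, hW_def⟩ : ∃ W : ℝ → ℝ, W = fun x => F x / f x := ⟨_, rfl⟩
      have hWd : ∀ x, HasDerivAt W (D x / f x^2) x := fun x => by
        rw [hW_def]
        have h : HasDerivAt (fun x => F x / f x) _ x := (hFd x).div (hfd x) (hfpos x).ne'
        convert h using 1
        rw [hD_def]
        congr 1
        ring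
      have hanti : StrictAntiOn W (Set.Iic y) := by
        apply strictAntiOn_of_deriv_neg (convex_Iic y)
        · rw [hW_def]
          exact (hFc.continuousOn.div hfc.continuousOn fun x _ => (hfpos x).ne')
        · intro x hx
          rw [interior_Iic] at hx
          rw [(hWd x).deriv]
          exact div_neg_of_neg_of_pos (hall x hx.le) (pow_pos (hfpos x) 2)
      have hWy : 0 < W y := by
        rw [hW_def]
        exact div_pos (hFpos y) (hfpos y)
      set x0 := min (y - 1) (-(|μ| + σ^2/(W y) + 1)) with hx0_def
      have hx0y : x0 < y := lt_of_le_of_lt (min_le_left _ _) (by linarith)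
      have hx0μ : x0 ≤ -(|μ| + σ^2/(W y) + 1) := min_le_right _ _
      have hWσ : 0 < σ^2/(W y) := div_pos hσ2 hWy
      have hden : σ^2/(W y) + 1 ≤ -x0 - |μ| := by
        have := abs_nonneg μ
        linarith
      have hδpos : 0 < (-x0 - |μ|)/σ^2 := div_pos (by linarith) hσ2
      have hbd : ∀ t ≤ x0, f t ≤ f x0 * Real.exp (((-x0 - |μ|)/σ^2)*(t-x0)) := by
        intro t ht
        have hcomp : ∀ s : ℝ, |s| ≤ |μ| →
            Real.exp (-(t - s)^2 / (2*σ^2))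
              ≤ Real.exp (-(x0 - s)^2 / (2*σ^2)) * Real.exp (((-x0 - |μ|)/σ^2)*(t-x0)) := by
          intro s hs
          rw [← Real.exp_add]
          apply Real.exp_le_exp.2
          have habs1 : -|μ| ≤ s := neg_le_of_abs_le hs
          have habs2 : s ≤ |μ| := le_of_abs_le hs
          have hkey0 : (x0 - s)^2 - (t - s)^2 ≤ 2*(-x0 - |μ|)*(t - x0) := by
            nlinarith [mul_nonneg (sub_nonneg.2 ht) (by linarith : (0:ℝ) ≤ x0 - t + 2*|μ| + 2*s)]
          rw [← sub_nonneg]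
          have hexp2 : (-(x0 - s)^2 / (2*σ^2) + ((-x0 - |μ|)/σ^2)*(t-x0)) - (-(t - s)^2 / (2*σ^2))
              = (2*(-x0 - |μ|)*(t - x0) - ((x0 - s)^2 - (t - s)^2))/(2*σ^2) := by
            field_simp
            ring
          rw [hexp2]
          exact div_nonneg (by linarith) (by positivity)
        have hc1 := hcomp μ (le_refl _)
        have hc2 := hcomp (-μ) (by rw [abs_neg])
        simp only [sub_neg_eq_add] at hc2
        rw [hf]
        simp only
        have h1 := mul_le_mul_of_nonneg_left hc1 (by nlinarith : (0:ℝ) ≤ 0.5 * c)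
        have h2 := mul_le_mul_of_nonneg_left hc2 (by nlinarith : (0:ℝ) ≤ 0.5 * c)
        calc 0.5 * (c * Real.exp (-(t - μ)^2 / (2*σ^2))) + 0.5 * (c * Real.exp (-(t + μ)^2 / (2*σ^2)))
            ≤ 0.5 * (c * (Real.exp (-(x0 - μ)^2 / (2*σ^2)) * Real.exp (((-x0 - |μ|)/σ^2)*(t-x0))))
              + 0.5 * (c * (Real.exp (-(x0 + μ)^2 / (2*σ^2)) * Real.exp (((-x0 - |μ|)/σ^2)*(t-x0)))) := by
              nlinarith [h1, h2]
          _ = (0.5 * (c * Real.exp (-(x0 - μ)^2 / (2*σ^2)))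
              + 0.5 * (c * Real.exp (-(x0 + μ)^2 / (2*σ^2)))) * Real.exp (((-x0 - |μ|)/σ^2)*(t-x0)) := by
              ring
      have htail := tail_bound hfint ((-x0 - |μ|)/σ^2) x0 hδpos hbd
      have hFx0 : F x0 = ∫ t in Set.Iic x0, f t := by rw [hF]
      have hWx0 : W x0 ≤ σ^2/(-x0 - |μ|) := by
        rw [hW_def]
        simp only
        rw [div_le_iff₀ (hfpos x0)]
        rw [hFx0]
        calc (∫ t in Set.Iic x0, f t) ≤ f x0 / ((-x0 - |μ|)/σ^2) := htail
          _ = σ^2/(-x0 - |μ|) * f x0 := by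
              rw [div_div_eq_mul_div]
              ring
      have hWlt : W x0 < W y := by
        have hd0 : 0 < -x0 - |μ| := by linarith
        have h6 : σ^2 < W y * (-x0 - |μ|) := by
          have h7 : W y * (σ^2/(W y) + 1) ≤ W y * (-x0 - |μ|) :=
            mul_le_mul_of_nonneg_left hden hWy.le
          have h8 : W y * (σ^2/(W y) + 1) = σ^2 + W y := by
            field_simp
          linarith
        have h9 : σ^2/(-x0 - |μ|) < W y := (div_lt_iff₀ hd0).2 (by linarith)
        linarith
      have := hanti (Set.mem_Iic.2 hx0y.le) (Set.mem_Iic.2 (le_refl y)) hx0y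
      linarith
    · -- sSup of the set where D ≥ 0
      push_neg at hall
      obtain ⟨x1, hx1y, hx1D⟩ := hall
      set S := {x | x ≤ y ∧ 0 ≤ D x} with hS_def
      have hS_ne : S.Nonempty := ⟨x1, hx1y, hx1D⟩
      have hS_bdd : BddAbove S := ⟨y, fun z hz => hz.1⟩
      have hS_closed : IsClosed S := by
        have : S = Set.Iic y ∩ D⁻¹' (Set.Ici 0) := by
          ext z
          exact Iff.rfl
        rw [this]
        exact isClosed_Iic.inter (isClosed_Ici.preimage hDcont)
      have hwS : sSup S ∈ S := hS_closed.csSup_mem hS_ne hS_bdd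
      set w := sSup S with hw_def
      have hwy : w < y := by
        rcases lt_or_eq_of_le hwS.1 with h | h
        · exact h
        · exfalso
          rw [h] at hwS
          exact absurd hwS.2 (not_le.2 hneg)
      have hDx_neg : ∀ z, w < z → z ≤ y → D z < 0 := by
        intro z h1 h2
        by_contra h'
        push_neg at h'
        have hzS : z ∈ S := ⟨h2, h'⟩
        have := le_csSup hS_bdd hzS
        linarith
      have hDw : D w = 0 := by
        rcases eq_or_lt_of_le hwS.2 with h | hpos
        · exact h.symm
        · exfalso
          have hev : ∀ᶠ z in 𝓝 w, 0 < D z :=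
            (hDcont.continuousAt).eventually (eventually_gt_nhds hpos)
          have hev2 : ∀ᶠ z in 𝓝[>] w, 0 < D z := hev.filter_mono nhdsWithin_le_nhds
          have hmem : Set.Ioo w y ∈ 𝓝[>] w := Ioo_mem_nhdsGT_of_mem ⟨le_refl w, hwy⟩
          obtain ⟨z, hz1, hz2⟩ := (hev2.and (eventually_of_mem hmem fun z hz => hz)).exists
          exact absurd (hDx_neg z hz2.1 hz2.2.le) (not_lt.2 hz1.le)
      have hslope := hasDerivAt_iff_tendsto_slope.1 (hDd w)
      have hslope2 : Tendsto (slope D w) (𝓝[>] w) (𝓝 (f w * f1 w - F w * f2 w)) :=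
        hslope.mono_left (nhdsWithin_mono w fun z hz => hz.ne')
      have hle : f w * f1 w - F w * f2 w ≤ 0 := by
        apply le_of_tendsto hslope2
        filter_upwards [Ioo_mem_nhdsGT_of_mem
          (show w ∈ Set.Ico w y from ⟨le_refl w, hwy⟩)] with z hz
        rw [slope_def_field, hDw, sub_zero]
        exact div_nonpos_of_nonpos_of_nonneg (hDx_neg z hz.1 hz.2.le).le
          (by linarith [hz.1])
      have hpos := hkey w (hwy.trans hy) hDw
      linarith
  -- conclude AntitoneOn
  apply antitoneOn_of_deriv_nonpos (convex_Iic 0)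
  · exact hfc.continuousOn.div hFc.continuousOn fun x _ => (hFpos x).ne'
  · intro x hx
    exact ((hfd x).div (hFd x) (hFpos x).ne').differentiableAt.differentiableWithinAt
  · intro x hx
    rw [interior_Iic] at hx
    rw [(show HasDerivAt (fun x => f x / F x) _ x from (hfd x).div (hFd x) (hFpos x).ne').deriv]
    apply div_nonpos_of_nonpos_of_nonneg ?_ (sq_nonneg _)
    have h := hDnonneg x hx
    rw [hD_def] at h
    simp only at h
    nlinarith [h]
end

section
/- Define the selective accuracy A_F(τ) = (1 − F(τ)) / (1 − F(τ) + F(−τ)) for a CDF F with density f and threshold τ ≥ 0. Then A_F is monotonically nondecreasing on [0, ∞) if and only if f(−τ)/F(−τ) ≥ f(τ)/(1 − F(τ)) for all τ ≥ 0 (with all denominators positive); it is nonincreasing iff the reverse inequality holds for all τ ≥ 0. -/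
lemma selacc_aux_deriv (f F : ℝ → ℝ) (hF' : ∀ x, HasDerivAt F (f x) x)
    (hD : ∀ τ : ℝ, 1 - F τ + F (-τ) ≠ 0) (τ : ℝ) :
    HasDerivAt (fun τ => (1 - F τ) / (1 - F τ + F (-τ)))
      (((1 - F τ) * f (-τ) - f τ * F (-τ)) / (1 - F τ + F (-τ)) ^ 2) τ := by
  have h1 : HasDerivAt (fun t => 1 - F t) (-f τ) τ := (hF' τ).const_sub 1
  have h2 : HasDerivAt (fun t : ℝ => F (-t)) (-f (-τ)) τ := by
    have : HasDerivAt (fun t : ℝ => F (-t)) (f (-τ) * -1) τ := (hF' (-τ)).comp τ (hasDerivAt_neg τ)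
    simpa using this
  have h3 : HasDerivAt (fun t => 1 - F t + F (-t)) (-f τ + -f (-τ)) τ := h1.add h2
  have h4 : HasDerivAt (fun t => (1 - F t) / (1 - F t + F (-t))) _ τ := h1.div h3 (hD τ)
  convert h4 using 1
  rw [div_eq_div_iff (pow_ne_zero 2 (hD τ)) (pow_ne_zero 2 (hD τ))]
  ring

/-- Selective accuracy `A_F(τ) = (1 - F τ)/(1 - F τ + F (-τ))` is nondecreasing on `[0,∞)`
iff `f(-τ)/F(-τ) ≥ f(τ)/(1 - F(τ))` for all `τ ≥ 0`, and nonincreasing iff the reverse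
inequality holds for all `τ ≥ 0`. -/
theorem selacc_monotone_iff (f F : ℝ → ℝ)
    (hF' : ∀ x, HasDerivAt F (f x) x) (hfpos : ∀ x, 0 < f x)
    (hF01 : ∀ x, 0 < F x ∧ F x < 1)
    (A : ℝ → ℝ) (hA : A = fun τ => (1 - F τ) / (1 - F τ + F (-τ))) :
    (MonotoneOn A (Set.Ici 0) ↔
        ∀ τ : ℝ, 0 ≤ τ → f τ / (1 - F τ) ≤ f (-τ) / F (-τ)) ∧
    (AntitoneOn A (Set.Ici 0) ↔
        ∀ τ : ℝ, 0 ≤ τ → f (-τ) / F (-τ) ≤ f τ / (1 - F τ)) := by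
  subst hA
  have hN : ∀ τ : ℝ, 0 < 1 - F τ := fun τ => by linarith [(hF01 τ).2]
  have hv : ∀ τ : ℝ, 0 < F τ := fun τ => (hF01 τ).1
  have hDpos : ∀ τ : ℝ, 0 < 1 - F τ + F (-τ) := fun τ => by linarith [hN τ, hv (-τ)]
  set A' : ℝ → ℝ := fun τ => ((1 - F τ) * f (-τ) - f τ * F (-τ)) / (1 - F τ + F (-τ)) ^ 2
    with hA'def
  have hA' : ∀ τ, HasDerivAt (fun τ => (1 - F τ) / (1 - F τ + F (-τ))) (A' τ) τ :=
    fun τ => selacc_aux_deriv f F hF' (fun τ => (hDpos τ).ne') τ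
  have hsq : ∀ τ : ℝ, (0:ℝ) < (1 - F τ + F (-τ)) ^ 2 := fun τ => pow_pos (hDpos τ) 2
  have hsign : ∀ τ : ℝ, (0 ≤ A' τ ↔ f τ / (1 - F τ) ≤ f (-τ) / F (-τ)) := by
    intro τ
    rw [hA'def]
    rw [le_div_iff₀ (hsq τ), zero_mul, div_le_div_iff₀ (hN τ) (hv (-τ))]
    constructor <;> intro h <;> nlinarith
  have hsign' : ∀ τ : ℝ, (A' τ ≤ 0 ↔ f (-τ) / F (-τ) ≤ f τ / (1 - F τ)) := by
    intro τ
    rw [hA'def]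
    rw [div_le_iff₀ (hsq τ), zero_mul, div_le_div_iff₀ (hv (-τ)) (hN τ)]
    constructor <;> intro h <;> nlinarith
  constructor
  · constructor
    · intro hmono τ hτ
      refine (hsign τ).1 ?_
      have h1 := hasDerivAt_iff_tendsto_slope.1 (hA' τ)
      have h2 : Filter.Tendsto (slope (fun τ => (1 - F τ) / (1 - F τ + F (-τ))) τ)
          (nhdsWithin τ (Set.Ioi τ)) (nhds (A' τ)) :=
        h1.mono_left (nhdsWithin_mono _ (fun y hy => ne_of_gt hy))
      refine ge_of_tendsto h2 ?_
      filter_upwards [self_mem_nhdsWithin] with y hy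
      have hy' : τ < y := hy
      have := hmono (Set.mem_Ici.2 hτ) (Set.mem_Ici.2 (le_trans hτ hy'.le)) hy'.le
      rw [slope_def_field]
      exact div_nonneg (by linarith) (by linarith)
    · intro h
      apply monotoneOn_of_deriv_nonneg (convex_Ici 0)
      · exact fun τ _ => (hA' τ).continuousAt.continuousWithinAt
      · exact fun τ _ => (hA' τ).differentiableAt.differentiableWithinAt
      · intro x hx
        rw [(hA' x).deriv]
        exact (hsign x).2 (h x (le_of_lt (by simpa using hx)))
  · constructor
    · intro hanti τ hτ
      refine (hsign' τ).1 ?_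
      have h1 := hasDerivAt_iff_tendsto_slope.1 (hA' τ)
      have h2 : Filter.Tendsto (slope (fun τ => (1 - F τ) / (1 - F τ + F (-τ))) τ)
          (nhdsWithin τ (Set.Ioi τ)) (nhds (A' τ)) :=
        h1.mono_left (nhdsWithin_mono _ (fun y hy => ne_of_gt hy))
      refine le_of_tendsto h2 ?_
      filter_upwards [self_mem_nhdsWithin] with y hy
      have hy' : τ < y := hy
      have := hanti (Set.mem_Ici.2 hτ) (Set.mem_Ici.2 (le_trans hτ hy'.le)) hy'.le
      rw [slope_def_field]
      exact div_nonpos_of_nonpos_of_nonneg (by linarith) (by linarith)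
    · intro h
      apply antitoneOn_of_deriv_nonpos (convex_Ici 0)
      · exact fun τ _ => (hA' τ).continuousAt.continuousWithinAt
      · exact fun τ _ => (hA' τ).differentiableAt.differentiableWithinAt
      · intro x hx
        rw [(hA' x).deriv]
        exact (hsign' x).2 (h x (le_of_lt (by simpa using hx)))
end

section
/- Let f be a probability density symmetric about μ ≥ 0 (f(x) = f(2μ − x)) with CDF F that is log-concave on (−∞, μ]. If A_F(0) ≥ 1/2 (equivalently F(0) ≤ 1/2), then the selective accuracy A_F(τ) = (1 − F(τ))/(1 − F(τ) + F(−τ)) is monotonically nondecreasing on [0, ∞). -/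
/-- If `f` is symmetric about `μ ≥ 0`, `F` is log-concave on `(-∞, μ]` (i.e. `f/F`
nonincreasing there), and `A_F(0) ≥ 1/2`, then the selective accuracy
`A_F(τ) = (1 - F τ)/(1 - F τ + F (-τ))` is nondecreasing on `[0, ∞)`. -/
theorem selacc_monotone_of_left_log_concave (f F : ℝ → ℝ) (μ : ℝ) (hμ : 0 ≤ μ)
    (hF' : ∀ x, HasDerivAt F (f x) x) (hfpos : ∀ x, 0 < f x)
    (hF01 : ∀ x, 0 < F x ∧ F x < 1)
    (hsym : ∀ x, f x = f (2 * μ - x))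
    (hlc : AntitoneOn (fun x => f x / F x) (Set.Iic μ))
    (hA0 : (1 : ℝ) / 2 ≤ (1 - F 0) / (1 - F 0 + F 0)) :
    MonotoneOn (fun τ => (1 - F τ) / (1 - F τ + F (-τ))) (Set.Ici 0) := by
  have hFd : Differentiable ℝ F := fun x => (hF' x).differentiableAt
  -- F is monotone
  have hFmono : Monotone F := by
    apply monotone_of_deriv_nonneg hFd
    intro x
    rw [(hF' x).deriv]
    exact (hfpos x).le
  -- symmetry of F around μ
  have hg : ∀ x : ℝ, HasDerivAt (fun x => F x + F (2*μ - x)) 0 x := by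
    intro x
    have h1 : HasDerivAt (fun x : ℝ => 2*μ - x) (-1) x := by
      simpa using (hasDerivAt_id x).const_sub (2*μ)
    have h2 := (hF' (2*μ - x)).comp x h1
    have h3 := (hF' x).add h2
    refine h3.congr_deriv ?_
    rw [hsym x]; ring
  have hconst : ∀ x, F x + F (2*μ - x) = 2 * F μ := by
    intro x
    have h := is_const_of_deriv_eq_zero (f := fun x => F x + F (2*μ - x))
      (fun y => (hg y).differentiableAt) (fun y => (hg y).deriv) x μ
    have : (2:ℝ)*μ - μ = μ := by ring
    rw [this] at h
    linarith
  -- F μ ≤ 1/2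
  have hFμ : F μ ≤ 1/2 := by
    by_contra h
    push_neg at h
    have hFμpos := (hF01 μ).1
    set δ : ℝ := f μ / F μ * (2 * F μ - 1) with hδ
    have hδpos : 0 < δ := by
      apply mul_pos (div_pos (hfpos μ) hFμpos)
      linarith
    have hlow : ∀ x ≤ μ, δ ≤ f x := by
      intro x hx
      have h1 : f μ / F μ ≤ f x / F x := hlc (Set.mem_Iic.2 hx) (Set.mem_Iic.2 le_rfl) hx
      have h2 : 2 * F μ - 1 ≤ F x := by
        have hc := hconst x
        have := (hF01 (2*μ - x)).2
        linarith
      have h3 : δ ≤ f x / F x * F x := by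
        apply mul_le_mul h1 h2 (by linarith) (le_of_lt (div_pos (hfpos x) (hF01 x).1))
      rwa [div_mul_cancel₀ _ (ne_of_gt (hF01 x).1)] at h3
    have hmono : MonotoneOn (fun y => F y - δ * y) (Set.Iic μ) := by
      apply monotoneOn_of_deriv_nonneg (convex_Iic μ)
      · exact (hFd.continuous.sub (continuous_const.mul continuous_id)).continuousOn
      · intro y _
        exact ((hF' y).sub ((hasDerivAt_id y).const_mul δ)).differentiableAt.differentiableWithinAt
      · intro y hy
        rw [interior_Iic] at hy
        have hd : HasDerivAt (fun y => F y - δ * y) (f y - δ) y := by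
          exact ((hF' y).sub ((hasDerivAt_id' y).const_mul δ)).congr_deriv (by ring)
        rw [hd.deriv]
        have := hlow y (le_of_lt hy)
        linarith
    have hxle : μ - 2/δ ≤ μ := by
      have : 0 < 2/δ := by positivity
      linarith
    have h4 := hmono (Set.mem_Iic.2 hxle) (Set.mem_Iic.2 le_rfl) hxle
    simp only at h4
    have h5 : δ * (2/δ) = 2 := mul_div_cancel₀ 2 (ne_of_gt hδpos)
    have h6 : 0 < F (μ - 2/δ) := (hF01 _).1
    have h7 : F μ < 1 := (hF01 μ).2
    nlinarith
  -- key inequality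
  have hkey : ∀ τ, 0 ≤ τ → f τ * F (-τ) ≤ f (-τ) * (1 - F τ) := by
    intro τ hτ
    have hFτn : 0 < F (-τ) := (hF01 (-τ)).1
    rcases le_total τ μ with hc | hc
    · have h1 : f τ / F τ ≤ f (-τ) / F (-τ) :=
        hlc (Set.mem_Iic.2 (by linarith)) (Set.mem_Iic.2 hc) (by linarith)
      rw [div_le_div_iff₀ (hF01 τ).1 hFτn] at h1
      have h3 : F τ ≤ 1 - F τ := by
        have := hFmono hc
        linarith
      nlinarith [hfpos (-τ)]
    · have h1 : f (2*μ - τ) / F (2*μ - τ) ≤ f (-τ) / F (-τ) :=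
        hlc (Set.mem_Iic.2 (by linarith)) (Set.mem_Iic.2 (by linarith)) (by linarith)
      rw [div_le_div_iff₀ (hF01 _).1 hFτn] at h1
      have h2 : F (2*μ - τ) ≤ 1 - F τ := by
        have := hconst τ
        linarith
      rw [hsym τ]
      nlinarith [hfpos (-τ), hfpos (2*μ - τ)]
  -- derivative of A
  have hD : ∀ τ : ℝ, 0 < 1 - F τ + F (-τ) := by
    intro τ
    have := (hF01 τ).2
    have := (hF01 (-τ)).1
    linarith
  have hAd : ∀ τ : ℝ, HasDerivAt (fun τ => (1 - F τ) / (1 - F τ + F (-τ)))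
      ((f (-τ) * (1 - F τ) - f τ * F (-τ)) / (1 - F τ + F (-τ))^2) τ := by
    intro τ
    have hn : HasDerivAt (fun τ => 1 - F τ) (-f τ) τ := by
      simpa using (hF' τ).const_sub (1:ℝ)
    have hm : HasDerivAt (fun τ : ℝ => F (-τ)) (-f (-τ)) τ := by
      have := (hF' (-τ)).comp τ (hasDerivAt_neg τ)
      exact this.congr_deriv (by ring)
    have hd : HasDerivAt (fun τ => 1 - F τ + F (-τ)) (-f τ + -f (-τ)) τ := hn.add hm
    have h := hn.div hd (ne_of_gt (hD τ))
    have heq : ((-f τ) * (1 - F τ + F (-τ)) - (1 - F τ) * (-f τ + -f (-τ))) /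
        (1 - F τ + F (-τ))^2 = (f (-τ) * (1 - F τ) - f τ * F (-τ)) / (1 - F τ + F (-τ))^2 := by
      ring
    rw [heq] at h
    exact h
  apply monotoneOn_of_deriv_nonneg (convex_Ici 0)
  · exact (Differentiable.continuous fun x => (hAd x).differentiableAt).continuousOn
  · intro x _
    exact (hAd x).differentiableAt.differentiableWithinAt
  · intro x hx
    rw [interior_Ici] at hx
    rw [(hAd x).deriv]
    apply div_nonneg
    · have := hkey x hx.le
      linarith
    · positivity
end

section
/- For skew-symmetric distributions F_α with fixed symmetric base density h and symmetric CDF G, if α₁ ≤ α₂ then F_{α₁}(x) ≥ F_{α₂}(x) for all x ∈ ℝ (stochastic ordering in the skew parameter). -/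
open MeasureTheory

/-- Stochastic ordering in the skew parameter: if `α₁ ≤ α₂` then `F_{α₁}(x) ≥ F_{α₂}(x)`
for all `x`, where `F_α(x) = ∫_{-∞}^x 2h(t)G(αt) dt`. -/
theorem skew_stochastic_ordering (h G : ℝ → ℝ)
    (hnonneg : ∀ t, 0 ≤ h t) (hsym : ∀ t, h (-t) = h t)
    (hGmono : Monotone G) (hGsym : ∀ t, G (-t) = 1 - G t)
    (F : ℝ → ℝ → ℝ)
    (hF : F = fun α x => ∫ t in Set.Iic x, 2 * h t * G (α * t))
    (hint : ∀ α : ℝ, Integrable (fun t => 2 * h t * G (α * t)))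
    (hprob : ∀ α : ℝ, ∫ t, 2 * h t * G (α * t) = 1) :
    ∀ α₁ α₂ x : ℝ, α₁ ≤ α₂ → F α₂ x ≤ F α₁ x := by
  intro α₁ α₂ x hα
  subst hF
  simp only
  rw [← sub_nonneg, ← integral_sub ((hint α₁).restrict) ((hint α₂).restrict)]
  -- φ t = 2h t (G(α₁ t) - G(α₂ t))
  rcases le_or_gt x 0 with hx | hx
  · apply setIntegral_nonneg measurableSet_Iic
    intro t ht
    have ht0 : t ≤ 0 := le_trans ht hx
    have : α₂ * t ≤ α₁ * t := by nlinarith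
    have := hGmono this
    have := hnonneg t
    nlinarith
  · have hsplit : (∫ t in Set.Iic x, (2 * h t * G (α₁ * t) - 2 * h t * G (α₂ * t)))
        + (∫ t in Set.Ioi x, (2 * h t * G (α₁ * t) - 2 * h t * G (α₂ * t)))
        = ∫ t, (2 * h t * G (α₁ * t) - 2 * h t * G (α₂ * t)) := by
      have := integral_add_compl (measurableSet_Iic (a := x))
        ((hint α₁).sub (hint α₂))
      simpa [Set.compl_Iic, Set.Ioi] using this
    have htot : (∫ t, (2 * h t * G (α₁ * t) - 2 * h t * G (α₂ * t))) = 0 := by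
      rw [integral_sub (hint α₁) (hint α₂), hprob α₁, hprob α₂]
      ring
    have htail : (∫ t in Set.Ioi x, (2 * h t * G (α₁ * t) - 2 * h t * G (α₂ * t))) ≤ 0 := by
      apply setIntegral_nonpos measurableSet_Ioi
      intro t ht
      have ht0 : 0 ≤ t := le_of_lt (lt_trans hx ht)
      have : α₁ * t ≤ α₂ * t := by nlinarith
      have := hGmono this
      have := hnonneg t
      nlinarith
    linarith
end

section
/- For a skew-symmetric family f_α(x) = 2h(x)G(αx) with CDF F_α, for all α ≥ 0 and τ ≥ 0: f_α(τ)/F_α(τ) ≥ f_0(τ)/F_0(τ) ≥ f_{−α}(τ)/F_{−α}(τ), where f_0 = h. -/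
open MeasureTheory

/-- Log-gradient ordering by skew: for `α ≥ 0` and `τ ≥ 0`,
`f_α(τ)/F_α(τ) ≥ f_0(τ)/F_0(τ) ≥ f_{-α}(τ)/F_{-α}(τ)`. -/
theorem skew_loggrad_ordering (h G : ℝ → ℝ)
    (hpos : ∀ t, 0 < h t) (hsym : ∀ t, h (-t) = h t)
    (hGmono : Monotone G) (hGpos : ∀ t, 0 < G t) (hGsym : ∀ t, G (-t) = 1 - G t)
    (f : ℝ → ℝ → ℝ) (hf : f = fun α t => 2 * h t * G (α * t))
    (F : ℝ → ℝ → ℝ) (hF : F = fun α x => ∫ t in Set.Iic x, f α t)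
    (hint : ∀ α : ℝ, Integrable (f α)) :
    ∀ α τ : ℝ, 0 ≤ α → 0 ≤ τ →
      f 0 τ / F 0 τ ≤ f α τ / F α τ ∧ f (-α) τ / F (-α) τ ≤ f 0 τ / F 0 τ := by
  intro α τ hα hτ
  have hG0 : (0:ℝ) < G 0 := hGpos 0
  -- positivity of f and F
  have hfpos : ∀ β t : ℝ, 0 < f β t := by
    intro β t
    rw [hf]
    have := hpos t; have := hGpos (β * t); positivity
  have hFpos : ∀ β : ℝ, 0 < F β τ := by
    intro β
    rw [hF]
    have hi : IntegrableOn (f β) (Set.Iic τ) := (hint β).integrableOn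
    rw [setIntegral_pos_iff_support_of_nonneg_ae
      (Filter.Eventually.of_forall fun t => (hfpos β t).le) hi]
    have hs : Function.support (f β) = Set.univ := by
      ext t; simp [Function.mem_support, (hfpos β t).ne']
    rw [hs, Set.univ_inter, Real.volume_Iic]
    exact ENNReal.zero_lt_top
  -- key comparison lemma
  have key : ∀ β : ℝ, (∀ t ∈ Set.Iic τ, G (β * t) ≤ G (β * τ)) →
      F β τ ≤ (G (β * τ) / G 0) * F 0 τ := by
    intro β hmono
    rw [hF]
    simp only
    rw [← integral_const_mul]
    apply setIntegral_mono_on (hint β).integrableOn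
      (((hint 0).const_mul _).integrableOn) measurableSet_Iic
    intro t ht
    have h1 : (G (β * τ) / G 0) * f 0 t = 2 * h t * G (β * τ) := by
      rw [hf]; simp only [zero_mul]; field_simp
    rw [h1, hf]
    simp only
    have := (hpos t).le
    have h2 := hmono t ht
    nlinarith
  have key' : ∀ β : ℝ, (∀ t ∈ Set.Iic τ, G (β * τ) ≤ G (β * t)) →
      (G (β * τ) / G 0) * F 0 τ ≤ F β τ := by
    intro β hmono
    rw [hF]
    simp only
    rw [← integral_const_mul]
    apply setIntegral_mono_on (((hint 0).const_mul _).integrableOn)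
      (hint β).integrableOn measurableSet_Iic
    intro t ht
    have h1 : (G (β * τ) / G 0) * f 0 t = 2 * h t * G (β * τ) := by
      rw [hf]; simp only [zero_mul]; field_simp
    rw [h1, hf]
    simp only
    have := (hpos t).le
    have h2 := hmono t ht
    nlinarith
  constructor
  · -- first inequality
    have hle : F α τ ≤ (G (α * τ) / G 0) * F 0 τ := by
      apply key
      intro t ht
      exact hGmono (mul_le_mul_of_nonneg_left ht hα)
    have heq : f 0 τ / F 0 τ = f α τ / ((G (α * τ) / G 0) * F 0 τ) := by
      rw [hf]
      simp only [zero_mul]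
      rw [div_eq_div_iff (hFpos 0).ne' (mul_pos (div_pos (hGpos _) hG0) (hFpos 0)).ne']
      · field_simp
    rw [heq]
    gcongr
    · exact (hfpos α τ).le
    · exact hFpos α
  · -- second inequality
    have hle : (G (-α * τ) / G 0) * F 0 τ ≤ F (-α) τ := by
      apply key'
      intro t ht
      exact hGmono (by nlinarith [ht.out])
    have heq : f 0 τ / F 0 τ = f (-α) τ / ((G (-α * τ) / G 0) * F 0 τ) := by
      rw [hf]
      simp only [zero_mul]
      rw [div_eq_div_iff (hFpos 0).ne' (mul_pos (div_pos (hGpos _) hG0) (hFpos 0)).ne']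
      · field_simp
    rw [heq]
    gcongr
    · exact (hfpos (-α) τ).le
    · exact mul_pos (div_pos (hGpos _) hG0) (hFpos 0)
end

section
/- Let F_{α,μ} be the CDF of the skew-symmetric density f_{α,μ}(x) = 2h(x−μ)G(α(x−μ)). For every fixed τ ≥ 0 and μ ∈ ℝ, the selective accuracy A_{F_{α,μ}}(τ) = (1 − F_{α,μ}(τ))/(1 − F_{α,μ}(τ) + F_{α,μ}(−τ)) is monotonically nondecreasing in α. -/
open MeasureTheory

/-- Selective accuracy is monotone in the skew parameter: for fixed `τ ≥ 0` and `μ ∈ ℝ`,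
`A_{F_{α,μ}}(τ) = (1 - F_{α,μ}(τ))/(1 - F_{α,μ}(τ) + F_{α,μ}(-τ))` is nondecreasing in
`α`. -/
theorem selacc_monotone_in_skew (h G : ℝ → ℝ)
    (hpos : ∀ t, 0 < h t) (hsym : ∀ t, h (-t) = h t)
    (hGmono : Monotone G) (hGpos : ∀ t, 0 < G t) (hGsym : ∀ t, G (-t) = 1 - G t)
    (F : ℝ → ℝ → ℝ → ℝ)
    (hF : F = fun α μ x => ∫ t in Set.Iic x, 2 * h (t - μ) * G (α * (t - μ)))
    (hint : ∀ α μ : ℝ, Integrable (fun t => 2 * h (t - μ) * G (α * (t - μ))))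
    (hprob : ∀ α μ : ℝ, ∫ t, 2 * h (t - μ) * G (α * (t - μ)) = 1)
    (τ μ : ℝ) (hτ : 0 ≤ τ) :
    Monotone (fun α => (1 - F α μ τ) / (1 - F α μ τ + F α μ (-τ))) := by
  subst hF
  set f : ℝ → ℝ → ℝ := fun α t => 2 * h (t - μ) * G (α * (t - μ)) with hf
  have fpos : ∀ α t, 0 < f α t := fun α t => by
    have := hpos (t - μ); have := hGpos (α * (t - μ)); positivity
  have hIntOn : ∀ (α : ℝ) (s : Set ℝ), IntegrableOn (f α) s := fun α s =>
    (hint α μ).integrableOn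
  -- splitting the integral
  have split : ∀ (α x : ℝ),
      (∫ t in Set.Iic x, f α t) + (∫ t in Set.Ioi x, f α t) = 1 := by
    intro α x
    rw [← setIntegral_union (Set.Iic_disjoint_Ioi le_rfl) measurableSet_Ioi
        (hIntOn α _) (hIntOn α _), Set.Iic_union_Ioi, setIntegral_univ]
    exact hprob α μ
  -- CDF is nonincreasing in α
  have key : ∀ a b : ℝ, a ≤ b → ∀ x : ℝ,
      (∫ t in Set.Iic x, f b t) ≤ (∫ t in Set.Iic x, f a t) := by
    intro a b hab x
    have hsub : ∀ (s : Set ℝ), (∫ t in s, (f b t - f a t)) =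
        (∫ t in s, f b t) - (∫ t in s, f a t) := fun s =>
      integral_sub (hIntOn b s) (hIntOn a s)
    have hd0 : (∫ t, (f b t - f a t)) = 0 := by
      rw [integral_sub (hint b μ) (hint a μ), hprob, hprob]; ring
    have hge : ∀ t, μ ≤ t → 0 ≤ f b t - f a t := by
      intro t ht
      have h1 : a * (t - μ) ≤ b * (t - μ) :=
        mul_le_mul_of_nonneg_right hab (by linarith)
      have h2 : G (a * (t - μ)) ≤ G (b * (t - μ)) := hGmono h1
      have h3 := (hpos (t - μ)).le
      simp only [hf]; nlinarith
    have hle : ∀ t, t ≤ μ → f b t - f a t ≤ 0 := by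
      intro t ht
      have h1 : b * (t - μ) ≤ a * (t - μ) :=
        mul_le_mul_of_nonpos_right hab (by linarith)
      have h2 : G (b * (t - μ)) ≤ G (a * (t - μ)) := hGmono h1
      have h3 := (hpos (t - μ)).le
      simp only [hf]; nlinarith
    have main : (∫ t in Set.Iic x, (f b t - f a t)) ≤ 0 := by
      rcases le_or_gt x μ with hx | hx
      · exact setIntegral_nonpos measurableSet_Iic
          (fun t ht => hle t (le_trans ht hx))
      · have hsplit : (∫ t in Set.Iic x, (f b t - f a t)) +
            (∫ t in Set.Ioi x, (f b t - f a t)) = 0 := by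
          rw [hsub, hsub]
          have h1 := split a x; have h2 := split b x
          linarith
        have hpos' : 0 ≤ (∫ t in Set.Ioi x, (f b t - f a t)) :=
          setIntegral_nonneg measurableSet_Ioi
            (fun t ht => hge t (le_of_lt (lt_trans hx ht)))
        linarith
    rw [hsub] at main; linarith
  -- positivity of tails
  have tpos : ∀ (α x : ℝ), 0 < (∫ t in Set.Iic x, f α t) := by
    intro α x
    rw [setIntegral_pos_iff_support_of_nonneg_ae
      (Filter.Eventually.of_forall (fun t => (fpos α t).le)) (hIntOn α _)]
    have : Function.support (f α) = Set.univ := by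
      ext t; simp [Function.support, (fpos α t).ne']
    rw [this, Set.univ_inter]
    simp [Real.volume_Iic]
  have spos : ∀ (α x : ℝ), 0 < (∫ t in Set.Ioi x, f α t) := by
    intro α x
    rw [setIntegral_pos_iff_support_of_nonneg_ae
      (Filter.Eventually.of_forall (fun t => (fpos α t).le)) (hIntOn α _)]
    have : Function.support (f α) = Set.univ := by
      ext t; simp [Function.support, (fpos α t).ne']
    rw [this, Set.univ_inter]
    simp [Real.volume_Ioi]
  intro a b hab
  simp only
  set Sa : ℝ := 1 - ∫ t in Set.Iic τ, f a t with hSa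
  set Sb : ℝ := 1 - ∫ t in Set.Iic τ, f b t with hSb
  set Ta : ℝ := ∫ t in Set.Iic (-τ), f a t with hTa
  set Tb : ℝ := ∫ t in Set.Iic (-τ), f b t with hTb
  have hSa' : Sa = ∫ t in Set.Ioi τ, f a t := by
    have := split a τ; rw [hSa]; linarith
  have hSb' : Sb = ∫ t in Set.Ioi τ, f b t := by
    have := split b τ; rw [hSb]; linarith
  have hSapos : 0 < Sa := hSa' ▸ spos a τ
  have hSbpos : 0 < Sb := hSb' ▸ spos b τ
  have hTapos : 0 < Ta := tpos a (-τ)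
  have hTbpos : 0 < Tb := tpos b (-τ)
  have hS : Sa ≤ Sb := by
    have := key a b hab τ; rw [hSa, hSb]; linarith
  have hT : Tb ≤ Ta := key a b hab (-τ)
  rw [div_le_div_iff₀ (by linarith) (by linarith)]
  nlinarith [mul_le_mul hS hT hTbpos.le hSbpos.le]
end

section
/- Suppose the selective accuracy of the unskewed translated distribution F_{0,μ} (with density h_μ(x) = h(x−μ)) is nondecreasing in τ on [0,∞), i.e. h_μ(−τ)/H_μ(−τ) ≥ h_μ(τ)/(1 − H_μ(τ)) for all τ ≥ 0. Then for every α > 0, the selective accuracy A_{F_{α,μ}}(τ) of the right-skewed distribution f_{α,μ}(x) = 2h(x−μ)G(α(x−μ)) is also nondecreasing in τ on [0,∞). -/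
open MeasureTheory

/-- Positivity of the lower-tail integral of a positive continuous integrable function. -/
lemma aux_integral_Iic_pos (f : ℝ → ℝ) (hfp : ∀ t, 0 < f t)
    (hfi : Integrable f) (x : ℝ) : 0 < ∫ t in Set.Iic x, f t := by
  rw [setIntegral_pos_iff_support_of_nonneg_ae
      (ae_of_all _ fun t => (hfp t).le) hfi.integrableOn]
  have : Function.support f = Set.univ := by
    ext t; simp [Function.mem_support, (hfp t).ne']
  rw [this, Set.univ_inter, Real.volume_Iic]
  exact ENNReal.zero_lt_top

/-- Positivity of the upper-tail integral of a positive continuous integrable function. -/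
lemma aux_integral_Ioi_pos (f : ℝ → ℝ) (hfp : ∀ t, 0 < f t)
    (hfi : Integrable f) (x : ℝ) : 0 < ∫ t in Set.Ioi x, f t := by
  rw [setIntegral_pos_iff_support_of_nonneg_ae
      (ae_of_all _ fun t => (hfp t).le) hfi.integrableOn]
  have : Function.support f = Set.univ := by
    ext t; simp [Function.mem_support, (hfp t).ne']
  rw [this, Set.univ_inter, Real.volume_Ioi]
  exact ENNReal.zero_lt_top

/-- Translation invariance for lower-tail integrals. -/
lemma aux_shift_Iic (f : ℝ → ℝ) (c x : ℝ) :
    (∫ t in Set.Iic x, f (t - c)) = ∫ t in Set.Iic (x - c), f t := by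
  rw [← integral_indicator measurableSet_Iic, ← integral_indicator measurableSet_Iic]
  rw [← integral_sub_right_eq_self (fun t => Set.indicator (Set.Iic (x - c)) f t) c]
  congr 1
  ext t
  by_cases ht : t ≤ x
  · rw [Set.indicator_of_mem (by exact ht), Set.indicator_of_mem (by simpa using ht)]
  · rw [Set.indicator_of_notMem (by exact ht), Set.indicator_of_notMem (by simpa using ht)]

/-- Translation invariance for upper-tail integrals. -/
lemma aux_shift_Ioi (f : ℝ → ℝ) (c x : ℝ) :
    (∫ t in Set.Ioi x, f (t - c)) = ∫ t in Set.Ioi (x - c), f t := by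
  rw [← integral_indicator measurableSet_Ioi, ← integral_indicator measurableSet_Ioi]
  rw [← integral_sub_right_eq_self (fun t => Set.indicator (Set.Ioi (x - c)) f t) c]
  congr 1
  ext t
  by_cases ht : x < t
  · rw [Set.indicator_of_mem (by exact ht), Set.indicator_of_mem (by simpa using ht)]
  · rw [Set.indicator_of_notMem (by exact ht), Set.indicator_of_notMem (by simpa using ht)]

/-- FTC: the CDF of a continuous integrable density has the density as derivative. -/
lemma aux_hasDerivAt_Iic (g : ℝ → ℝ) (hgc : Continuous g) (hgi : Integrable g) (x : ℝ) :
    HasDerivAt (fun y => ∫ t in Set.Iic y, g t) (g x) x := by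
  have key : (fun y => ∫ t in Set.Iic y, g t)
      = fun y => (∫ t in Set.Iic (0 : ℝ), g t) + ∫ t in (0 : ℝ)..y, g t := by
    funext y
    rw [← intervalIntegral.integral_Iic_sub_Iic hgi.integrableOn hgi.integrableOn]
    ring
  rw [key]
  exact (intervalIntegral.integral_hasDerivAt_right hgi.intervalIntegrable
    hgc.stronglyMeasurable.stronglyMeasurableAtFilter hgc.continuousAt).const_add _

/-- If the selective accuracy of the unskewed translated distribution `H_μ` is nondecreasing
on `[0,∞)` (equivalently `h_μ(-τ)/H_μ(-τ) ≥ h_μ(τ)/(1 - H_μ(τ))` for all `τ ≥ 0`), then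
for every `α > 0` the selective accuracy of the right-skewed `F_{α,μ}` is also
nondecreasing on `[0,∞)`. -/
theorem skew_preserves_monotonicity (h G : ℝ → ℝ)
    (hpos : ∀ t, 0 < h t) (hsym : ∀ t, h (-t) = h t) (hcont : Continuous h)
    (hGmono : Monotone G) (hGpos : ∀ t, 0 < G t) (hGsym : ∀ t, G (-t) = 1 - G t)
    (hGcont : Continuous G)
    (H : ℝ → ℝ) (hH : H = fun x => ∫ t in Set.Iic x, h t)
    (hhint : Integrable h) (hhprob : ∫ t, h t = 1)
    (F : ℝ → ℝ → ℝ → ℝ)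
    (hF : F = fun α μ x => ∫ t in Set.Iic x, 2 * h (t - μ) * G (α * (t - μ)))
    (hint : ∀ α μ : ℝ, Integrable (fun t => 2 * h (t - μ) * G (α * (t - μ))))
    (hprob : ∀ α μ : ℝ, ∫ t, 2 * h (t - μ) * G (α * (t - μ)) = 1)
    (μ α : ℝ) (hα : 0 < α)
    (hbase : ∀ τ : ℝ, 0 ≤ τ →
      h (τ - μ) / (1 - H (τ - μ)) ≤ h (-τ - μ) / H (-τ - μ)) :
    MonotoneOn (fun τ => (1 - F α μ τ) / (1 - F α μ τ + F α μ (-τ))) (Set.Ici 0) := by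
  -- the skewed density
  set g : ℝ → ℝ := fun t => 2 * h (t - μ) * G (α * (t - μ)) with hgdef
  have hgc : Continuous g := by
    apply Continuous.mul
    · exact continuous_const.mul (hcont.comp (continuous_id.sub continuous_const))
    · exact hGcont.comp (continuous_const.mul (continuous_id.sub continuous_const))
  have hgpos : ∀ t, 0 < g t := fun t =>
    mul_pos (mul_pos two_pos (hpos _)) (hGpos _)
  have hgint : Integrable g := hint α μ
  have hgprob : ∫ t, g t = 1 := hprob α μ
  -- the translated unskewed density
  set hμ : ℝ → ℝ := fun t => h (t - μ) with hμdef
  have hμpos : ∀ t, 0 < hμ t := fun t => hpos _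
  have hμint : Integrable hμ := hhint.comp_sub_right μ
  have hμprob : ∫ t, hμ t = 1 := by
    have h1 : (∫ x, h (x - μ)) = ∫ x, h x := integral_sub_right_eq_self h μ
    simpa [hμdef] using h1.trans hhprob
  -- CDFs
  have hFeq : ∀ x, F α μ x = ∫ t in Set.Iic x, g t := by
    intro x; rw [hF]
  have hHeq : ∀ x, H x = ∫ t in Set.Iic x, h t := by
    intro x; rw [hH]
  -- basic positivity facts
  have hHpos : ∀ x, 0 < H x := fun x => by
    rw [hHeq]; exact aux_integral_Iic_pos h hpos hhint x
  have hHlt : ∀ x, H x < 1 := by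
    intro x
    have := intervalIntegral.integral_Iic_add_Ioi (b := x) (μ := volume) hhint.integrableOn hhint.integrableOn
    rw [hhprob] at this
    have h2 := aux_integral_Ioi_pos h hpos hhint x
    rw [hHeq]; linarith
  have hHtail : ∀ x, (∫ t in Set.Ioi x, h t) = 1 - H x := by
    intro x
    have := intervalIntegral.integral_Iic_add_Ioi (b := x) (μ := volume) hhint.integrableOn hhint.integrableOn
    rw [hhprob] at this
    rw [hHeq]; linarith
  have hFpos : ∀ x, 0 < F α μ x := fun x => by
    rw [hFeq]; exact aux_integral_Iic_pos g hgpos hgint x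
  have hFtail : ∀ x, (∫ t in Set.Ioi x, g t) = 1 - F α μ x := by
    intro x
    have := intervalIntegral.integral_Iic_add_Ioi (b := x) (μ := volume) hgint.integrableOn hgint.integrableOn
    rw [hgprob] at this
    rw [hFeq]; linarith
  have hFlt : ∀ x, F α μ x < 1 := by
    intro x
    have h2 := aux_integral_Ioi_pos g hgpos hgint x
    rw [hFtail x] at h2; linarith
  -- translation identities for H
  have hshiftIic : ∀ x, (∫ t in Set.Iic x, hμ t) = H (x - μ) := by
    intro x
    rw [hHeq]
    exact aux_shift_Iic h μ x
  have hshiftIoi : ∀ x, (∫ t in Set.Ioi x, hμ t) = 1 - H (x - μ) := by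
    intro x
    rw [← hHtail]
    exact aux_shift_Ioi h μ x
  -- upper bound for F (comparison on Iic)
  have hFub : ∀ x, F α μ x ≤ 2 * G (α * (x - μ)) * H (x - μ) := by
    intro x
    rw [hFeq]
    calc (∫ t in Set.Iic x, g t)
        ≤ ∫ t in Set.Iic x, 2 * G (α * (x - μ)) * hμ t := by
          apply setIntegral_mono_on hgint.integrableOn
            ((hμint.const_mul _).integrableOn) measurableSet_Iic
          intro t ht
          simp only [Set.mem_Iic] at ht
          have : G (α * (t - μ)) ≤ G (α * (x - μ)) :=
            hGmono (by nlinarith)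
          have h1 : 0 < h (t - μ) := hpos _
          simp only [hgdef, hμdef]
          nlinarith
      _ = 2 * G (α * (x - μ)) * ∫ t in Set.Iic x, hμ t := integral_const_mul _ _
      _ = 2 * G (α * (x - μ)) * H (x - μ) := by rw [hshiftIic]
  -- lower bound for 1 - F (comparison on Ioi)
  have hFlb : ∀ x, 2 * G (α * (x - μ)) * (1 - H (x - μ)) ≤ 1 - F α μ x := by
    intro x
    rw [← hFtail]
    calc 2 * G (α * (x - μ)) * (1 - H (x - μ))
        = 2 * G (α * (x - μ)) * ∫ t in Set.Ioi x, hμ t := by rw [hshiftIoi]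
      _ = ∫ t in Set.Ioi x, 2 * G (α * (x - μ)) * hμ t := (integral_const_mul _ _).symm
      _ ≤ ∫ t in Set.Ioi x, g t := by
          apply setIntegral_mono_on ((hμint.const_mul _).integrableOn)
            hgint.integrableOn measurableSet_Ioi
          intro t ht
          simp only [Set.mem_Ioi] at ht
          have : G (α * (x - μ)) ≤ G (α * (t - μ)) :=
            hGmono (by nlinarith)
          have h1 : 0 < h (t - μ) := hpos _
          simp only [hgdef, hμdef]
          nlinarith
  -- the key hazard-rate inequality
  have hkey : ∀ τ : ℝ, 0 ≤ τ → g τ * F α μ (-τ) ≤ g (-τ) * (1 - F α μ τ) := by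
    intro τ hτ
    have hb := hbase τ hτ
    have hH1 : 0 < H (-τ - μ) := hHpos _
    have hH2 : 0 < 1 - H (τ - μ) := by have := hHlt (τ - μ); linarith
    have hcross : h (τ - μ) * H (-τ - μ) ≤ h (-τ - μ) * (1 - H (τ - μ)) := by
      rw [div_le_div_iff₀ hH2 hH1] at hb
      linarith
    have hub := hFub (-τ)
    have hlb := hFlb τ
    have hG1 : 0 < G (α * (τ - μ)) := hGpos _
    have hG2 : 0 < G (α * (-τ - μ)) := hGpos _
    have hFp : 0 < F α μ (-τ) := hFpos _
    have hgv1 : g τ = 2 * h (τ - μ) * G (α * (τ - μ)) := rfl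
    have hgv2 : g (-τ) = 2 * h (-τ - μ) * G (α * (-τ - μ)) := rfl
    have hp1 : 0 < h (τ - μ) := hpos _
    have hp2 : 0 < h (-τ - μ) := hpos _
    calc g τ * F α μ (-τ)
        ≤ (2 * h (τ - μ) * G (α * (τ - μ))) * (2 * G (α * (-τ - μ)) * H (-τ - μ)) := by
          rw [hgv1]
          apply mul_le_mul_of_nonneg_left hub
          positivity
      _ = (4 * G (α * (τ - μ)) * G (α * (-τ - μ))) * (h (τ - μ) * H (-τ - μ)) := by ring
      _ ≤ (4 * G (α * (τ - μ)) * G (α * (-τ - μ))) * (h (-τ - μ) * (1 - H (τ - μ))) := by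
          apply mul_le_mul_of_nonneg_left hcross
          positivity
      _ = (2 * h (-τ - μ) * G (α * (-τ - μ))) * (2 * G (α * (τ - μ)) * (1 - H (τ - μ))) := by
          ring
      _ ≤ g (-τ) * (1 - F α μ τ) := by
          rw [hgv2]
          apply mul_le_mul_of_nonneg_left hlb
          positivity
  -- derivatives
  have hFderiv : ∀ x, HasDerivAt (F α μ) (g x) x := by
    intro x
    have := aux_hasDerivAt_Iic g hgc hgint x
    have heq : F α μ = fun y => ∫ t in Set.Iic y, g t := by
      funext y; exact hFeq y
    rw [heq]
    exact this
  have hden : ∀ x, 0 < 1 - F α μ x + F α μ (-x) := by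
    intro x
    have := hFlt x
    have := hFpos (-x)
    linarith
  have hR : ∀ x, HasDerivAt (fun τ => (1 - F α μ τ) / (1 - F α μ τ + F α μ (-τ)))
      (((-g x) * (1 - F α μ x + F α μ (-x)) - (1 - F α μ x) * ((-g x) + (g (-x)) * (-1)))
        / (1 - F α μ x + F α μ (-x)) ^ 2) x := by
    intro x
    have hu : HasDerivAt (fun τ => 1 - F α μ τ) (-g x) x := by
      simpa using (hFderiv x).const_sub 1
    have hv : HasDerivAt (fun τ => F α μ (-τ)) (g (-x) * (-1)) x :=
      (hFderiv (-x)).comp x (by simpa using (hasDerivAt_neg x))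
    exact hu.div (hu.add hv) (hden x).ne'
  apply monotoneOn_of_deriv_nonneg (convex_Ici 0)
  · exact fun x _ => ((hR x).differentiableAt.continuousAt).continuousWithinAt
  · intro x _
    exact (hR x).differentiableAt.differentiableWithinAt
  · intro x hx
    rw [interior_Ici] at hx
    rw [(hR x).deriv]
    apply div_nonneg _ (sq_nonneg _)
    have := hkey x (le_of_lt hx)
    nlinarith
end
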